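/- Let p be a prime, α a positive integer, and G the cyclic group of order p^α. Let k < p be a positive integer, a_1,...,a_k distinct elements of G, and b_1,...,b_k arbitrary elements of G. Then some permutation π ∈ S_k makes a_1·b_{π(1)}, ..., a_k·b_{π(k)} pairwise distinct. -/

import Mathlib

open Finset Polynomial

/-- Key algebraic identity: the sum over all permutations of the "twisted Vandermonde"
products factors as a Vandermonde determinant times a permanent-type sum. -/
lemma dkss_sum_identity {k : ℕ} {R : Type*} [CommRing R] (x y : Fin k → R) :
    ∑ π : Equiv.Perm (Fin k), ∏ i : Fin k, ∏ j ∈ Finset.Ioi i,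
        (x j * y (π j) - x i * y (π i))
      = (∏ i : Fin k, ∏ j ∈ Finset.Ioi i, (x j - x i)) *
        ∑ π : Equiv.Perm (Fin k), ∏ j : Fin k, y (π j) ^ (j : ℕ) := by
  have key : ∀ π : Equiv.Perm (Fin k),
      ∏ i : Fin k, ∏ j ∈ Finset.Ioi i, (x j * y (π j) - x i * y (π i))
      = ∑ σ : Equiv.Perm (Fin k), Equiv.Perm.sign σ •
          ((∏ i : Fin k, x (σ i) ^ (i : ℕ)) * ∏ i : Fin k, y ((π * σ) i) ^ (i : ℕ)) := by
    intro π
    rw [← Matrix.det_vandermonde (fun i => x i * y (π i)), Matrix.det_apply]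
    refine Finset.sum_congr rfl fun σ _ => ?_
    rw [← Finset.prod_mul_distrib]
    congr 1
    refine Finset.prod_congr rfl fun i _ => ?_
    simp [Matrix.vandermonde_apply, mul_pow, Equiv.Perm.mul_apply]
  simp_rw [key]
  rw [Finset.sum_comm]
  have hdet : (∏ i : Fin k, ∏ j ∈ Finset.Ioi i, (x j - x i))
      = ∑ σ : Equiv.Perm (Fin k), Equiv.Perm.sign σ • ∏ i : Fin k, x (σ i) ^ (i : ℕ) := by
    rw [← Matrix.det_vandermonde x, Matrix.det_apply]
    exact Finset.sum_congr rfl fun σ _ => by simp [Matrix.vandermonde_apply]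
  rw [hdet, Finset.sum_mul]
  refine Finset.sum_congr rfl fun σ _ => ?_
  rw [smul_mul_assoc]
  have : ∑ π : Equiv.Perm (Fin k), ∏ i : Fin k, y ((π * σ) i) ^ (i : ℕ)
      = ∑ π : Equiv.Perm (Fin k), ∏ i : Fin k, y (π i) ^ (i : ℕ) :=
    Equiv.sum_comp (Equiv.mulRight σ) fun τ => ∏ i : Fin k, y (τ i) ^ (i : ℕ)
  rw [← this, ← Finset.smul_sum, ← Finset.mul_sum]

/-- The "permanent" factor is nonzero: modulo the cyclotomic ideal it is `k!`,
which is not divisible by `p` since `k < p`. -/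
lemma dkss_perm_ne_zero {p β k : ℕ} (hp : p.Prime) (hkp : k < p)
    {ζ : ℂ} (hζ : IsPrimitiveRoot ζ (p ^ (β + 1))) (B : Fin k → ℕ) :
    ∑ π : Equiv.Perm (Fin k), ∏ j : Fin k, (ζ ^ B (π j)) ^ (j : ℕ) ≠ 0 := by
  haveI : Fact p.Prime := ⟨hp⟩
  intro h0
  have hnpos : 0 < p ^ (β + 1) := pow_pos hp.pos _
  set Q : ℤ[X] := ∑ π : Equiv.Perm (Fin k), ∏ j : Fin k, (X : ℤ[X]) ^ (B (π j) * (j : ℕ))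
    with hQ
  have hQeval : Polynomial.aeval ζ Q = 0 := by
    rw [hQ, map_sum, ← h0]
    refine Finset.sum_congr rfl fun π _ => ?_
    rw [map_prod]
    exact Finset.prod_congr rfl fun j _ => by rw [map_pow, aeval_X, pow_mul]
  have hdvd : cyclotomic (p ^ (β + 1)) ℤ ∣ Q := by
    rw [Polynomial.cyclotomic_eq_minpoly hζ hnpos]
    exact minpoly.isIntegrallyClosed_dvd (hζ.isIntegral hnpos) hQeval
  obtain ⟨H, hH⟩ := hdvd
  have hQone : Q.eval 1 = (Nat.factorial k : ℤ) := by
    rw [hQ, Polynomial.eval_finset_sum]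
    have : ∀ π : Equiv.Perm (Fin k),
        (∏ j : Fin k, (X : ℤ[X]) ^ (B (π j) * (j : ℕ))).eval 1 = 1 := by
      intro π
      rw [Polynomial.eval_prod]
      simp
    simp_rw [this]
    simp [Finset.card_univ, Fintype.card_perm, Fintype.card_fin]
  have hpdvd : (p : ℤ) ∣ (Nat.factorial k : ℤ) := by
    refine ⟨H.eval 1, ?_⟩
    rw [← hQone, hH, Polynomial.eval_mul, Polynomial.eval_one_cyclotomic_prime_pow]
  have : p ∣ Nat.factorial k := Int.natCast_dvd_natCast.mp hpdvd
  exact absurd ((Nat.Prime.dvd_factorial hp).mp this) (Nat.not_le.mpr hkp)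

/-- DKSS theorem, cyclic prime-power case: in a cyclic group of order `p^α`, given
`k < p` distinct elements `a i` and arbitrary `b i`, some permutation makes the
products distinct. -/
theorem dkss_cyclic_prime_power {G : Type*} [CommGroup G] [Fintype G] [IsCyclic G]
    {p α : ℕ} (hp : p.Prime) (hα : 0 < α) (hG : Fintype.card G = p ^ α)
    {k : ℕ} (hk : 0 < k) (hkp : k < p)
    (a b : Fin k → G) (ha : Function.Injective a) :
    ∃ π : Equiv.Perm (Fin k), Function.Injective (fun i => a i * b (π i)) := by
  haveI : Fact p.Prime := ⟨hp⟩
  obtain ⟨β, rfl⟩ : ∃ β, α = β + 1 := ⟨α - 1, (Nat.succ_pred_eq_of_pos hα).symm⟩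
  have hnpos : 0 < p ^ (β + 1) := pow_pos hp.pos _
  obtain ⟨g, hg⟩ := IsCyclic.exists_generator (α := G)
  have hord : orderOf g = p ^ (β + 1) := by
    rw [orderOf_eq_card_of_forall_mem_zpowers hg, Nat.card_eq_fintype_card, hG]
  have hexp : ∀ x : G, ∃ m : ℕ, g ^ m = x := by
    intro x
    have := hg x
    rwa [← mem_powers_iff_mem_zpowers, Submonoid.mem_powers_iff] at this
  choose E hE using hexp
  set ζ : ℂ := Complex.exp (2 * Real.pi * Complex.I / (p ^ (β + 1) : ℕ)) with hζdef
  have hζ : IsPrimitiveRoot ζ (p ^ (β + 1)) :=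
    Complex.isPrimitiveRoot_exp _ hnpos.ne'
  -- pass to units of ℂ for the order computation
  set u : ℂˣ := (hζ.isUnit hnpos.ne').unit with hu
  have hζu : IsPrimitiveRoot u (p ^ (β + 1)) := hζ.isUnit_unit hnpos.ne'
  have horder : orderOf u = p ^ (β + 1) := hζu.eq_orderOf.symm
  have huval : (u : ℂ) = ζ := rfl
  have htrans : ∀ s t : ℕ, (g ^ s = g ^ t) ↔ (ζ ^ s = ζ ^ t) := by
    intro s t
    have h1 : (ζ ^ s = ζ ^ t) ↔ (u ^ s = u ^ t) := by
      rw [Units.ext_iff, Units.val_pow_eq_pow_val, Units.val_pow_eq_pow_val, huval]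
    rw [h1, pow_eq_pow_iff_modEq, pow_eq_pow_iff_modEq, hord, horder]
  set x : Fin k → ℂ := fun i => ζ ^ E (a i) with hx
  set y : Fin k → ℂ := fun j => ζ ^ E (b j) with hy
  have hxne : (∏ i : Fin k, ∏ j ∈ Finset.Ioi i, (x j - x i)) ≠ 0 := by
    rw [Finset.prod_ne_zero_iff]
    intro i _
    rw [Finset.prod_ne_zero_iff]
    intro j hj
    rw [sub_ne_zero]
    intro hxx
    have : g ^ E (a j) = g ^ E (a i) := (htrans _ _).mpr hxx
    rw [hE, hE] at this
    exact absurd (ha this) (Finset.mem_Ioi.mp hj).ne'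
  have hyne : (∑ π : Equiv.Perm (Fin k), ∏ j : Fin k, y (π j) ^ (j : ℕ)) ≠ 0 :=
    dkss_perm_ne_zero hp hkp hζ fun j => E (b j)
  have hsum : (∑ π : Equiv.Perm (Fin k), ∏ i : Fin k, ∏ j ∈ Finset.Ioi i,
      (x j * y (π j) - x i * y (π i))) ≠ 0 := by
    rw [dkss_sum_identity]
    exact mul_ne_zero hxne hyne
  obtain ⟨π, -, hπ⟩ := Finset.exists_ne_zero_of_sum_ne_zero hsum
  refine ⟨π, ?_⟩
  have main : ∀ i j : Fin k, i < j → a i * b (π i) ≠ a j * b (π j) := by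
    intro i j hlt heq
    have h1 := (Finset.prod_ne_zero_iff.mp hπ) i (Finset.mem_univ i)
    have hfac : x j * y (π j) - x i * y (π i) ≠ 0 :=
      Finset.prod_ne_zero_iff.mp h1 j (Finset.mem_Ioi.mpr hlt)
    apply hfac
    rw [sub_eq_zero]
    have hg2 : g ^ (E (a j) + E (b (π j))) = g ^ (E (a i) + E (b (π i))) := by
      rw [pow_add, pow_add, hE, hE, hE, hE]
      exact heq.symm
    have hz2 := (htrans _ _).mp hg2
    rw [pow_add, pow_add] at hz2
    exact hz2
  intro i j hij
  by_contra hne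
  rcases lt_or_gt_of_ne hne with h | h
  · exact absurd hij (main i j h)
  · exact absurd hij.symm (main j i h)
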